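/- Let p ∈ ℝ with p ∉ {−(k+1)/2 : k ∈ ℕ₀} and p ≠ 0, let P = [[κ₁,κ₃],[κ₃,κ₂]] be a real symmetric 2×2 matrix with det P ≠ 0, and let ψ ∈ ℝ. Let κ ∈ ℂ with κ² = det P, set σ := 2p·κ₃ − ψ·κ₁ and α := σ/(2iκ) + p. Then for all z ∈ ℂ: M(α, 2p, −2iκz) − (ψκ₁/(2p(2p+1)))·z·M(α+1, 2p+2, −2iκz) = (1/2)·M(α, 2p+1, −2iκz) + (1/2)·M(α+1, 2p+1, −2iκz) − (κ₃/(2p+1))·z·M(α+1, 2p+2, −2iκz). -/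

import Mathlib

open Matrix MeasureTheory Filter

noncomputable section

def matJ : Matrix (Fin 2) (Fin 2) ℝ := !![0, -1; 1, 0]

def Dpsi (p ψ a : ℝ) : Matrix (Fin 2) (Fin 2) ℝ :=
  if p = 0 then !![1, 0; ψ * Real.log a, 1]
  else !![1, 0; ψ / (2 * p), 1] * !![a ^ p, 0; 0, a ^ (-p)] * !![1, 0; -ψ / (2 * p), 1]

def HPpsi (p ψ : ℝ) (P : Matrix (Fin 2) (Fin 2) ℝ) (a : ℝ) : Matrix (Fin 2) (Fin 2) ℝ :=
  Dpsi p ψ a * P * (Dpsi p ψ a)ᵀ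

def SatRec (p : ℝ) (P : Matrix (Fin 2) (Fin 2) ℝ) (ψ : ℝ) (α β : ℕ → ℝ) : Prop :=
  α 0 = 1 ∧ β 0 = 0 ∧ ∀ n : ℕ,
    !![α (n + 1), β (n + 1)] =
      (-1 / (((n : ℝ) + 1) * (2 * p + (n : ℝ) + 1))) •
        (!![α n, β n] * (P * matJ * !![2 * p + (n : ℝ) + 1, 0; ψ, (n : ℝ) + 1]))

def genF (c : ℕ → ℝ) (z : ℂ) : ℂ := ∑' n : ℕ, (c n : ℂ) * z ^ n

def rowAB (p ψ : ℝ) (α β : ℕ → ℝ) (a : ℝ) (z : ℂ) : Matrix (Fin 1) (Fin 2) ℂ :=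
  !![((a ^ p : ℝ) : ℂ) * genF α ((a : ℂ) * z), ((a ^ p : ℝ) : ℂ) * genF β ((a : ℂ) * z)] *
    ((Dpsi p ψ a)⁻¹).map Complex.ofReal

/-- The rising factorial (Pochhammer symbol) (x)ₙ in ℂ. -/
def risingFac (x : ℂ) : ℕ → ℂ
  | 0 => 1
  | n + 1 => risingFac x n * (x + n)

/-- Kummer's confluent hypergeometric function M(a,b,z) = Σ (a)ₙ/(b)ₙ · zⁿ/n!. -/
def kummerM (a b z : ℂ) : ℂ :=
  ∑' n : ℕ, risingFac a n / risingFac b n * z ^ n / (n.factorial : ℂ)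

/-- The confluent hypergeometric limit function ₀F₁(b,z) = Σ 1/(b)ₙ · zⁿ/n!. -/
def hyp0F1 (b z : ℂ) : ℂ :=
  ∑' n : ℕ, (1 / risingFac b n) * z ^ n / (n.factorial : ℂ)
lemma risingFac_succ (x : ℂ) (n : ℕ) : risingFac x (n+1) = risingFac x n * (x + n) := rfl

lemma risingFac_succ_left (x : ℂ) (n : ℕ) : risingFac x (n+1) = x * risingFac (x+1) n := by
  induction n with
  | zero => simp [risingFac]
  | succ k ih => rw [risingFac_succ, ih, risingFac_succ]; push_cast; ring

lemma risingFac_ne_zero {b : ℂ} (hb : ∀ k : ℕ, b ≠ -(k:ℂ)) (n : ℕ) : risingFac b n ≠ 0 := by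
  induction n with
  | zero => simp [risingFac]
  | succ k ih =>
    rw [risingFac_succ]
    refine mul_ne_zero ih fun h => hb k (by linear_combination h)

lemma summable_kummer (a b w : ℂ) (hb : ∀ k : ℕ, b ≠ -(k:ℂ)) :
    Summable (fun n : ℕ => risingFac a n / risingFac b n * w ^ n / (n.factorial : ℂ)) := by
  have hbn : ∀ n : ℕ, risingFac b n ≠ 0 := risingFac_ne_zero hb
  have hbk : ∀ n : ℕ, b + (n:ℂ) ≠ 0 := fun n h => hb n (by linear_combination h)
  apply summable_of_ratio_norm_eventually_le (r := 1/2) (by norm_num)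
  filter_upwards [eventually_ge_atTop (max 1 (⌈‖a‖⌉₊ + ⌈2*‖b‖⌉₊ + ⌈8*‖w‖⌉₊))] with n hn
  have hn1 : 1 ≤ n := le_trans (le_max_left _ _) hn
  have hsum : (⌈‖a‖⌉₊ + ⌈2*‖b‖⌉₊ + ⌈8*‖w‖⌉₊ : ℕ) ≤ n := le_trans (le_max_right _ _) hn
  have hNa : ‖a‖ ≤ (n:ℝ) := le_trans (Nat.le_ceil _) (by exact_mod_cast le_trans (by omega) hsum)
  have hNb : 2*‖b‖ ≤ (n:ℝ) := le_trans (Nat.le_ceil _) (by exact_mod_cast le_trans (by omega) hsum)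
  have hNw : 8*‖w‖ ≤ (n:ℝ) := le_trans (Nat.le_ceil _) (by exact_mod_cast le_trans (by omega) hsum)
  have hfe : risingFac a (n+1) / risingFac b (n+1) * w^(n+1) / ((n+1).factorial : ℂ)
      = ((a+n)*w/((b+n)*((n:ℂ)+1))) * (risingFac a n / risingFac b n * w^n / (n.factorial : ℂ)) := by
    rw [risingFac_succ, risingFac_succ, Nat.factorial_succ]
    have h1 : ((n:ℂ)+1) ≠ 0 := Nat.cast_add_one_ne_zero n
    have h2 : ((n.factorial :ℕ):ℂ) ≠ 0 := Nat.cast_ne_zero.mpr n.factorial_ne_zero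
    push_cast
    field_simp
    ring
  rw [hfe, norm_mul]
  have hnormn1 : ‖((n:ℂ)+1)‖ = (n:ℝ)+1 := by
    rw [show ((n:ℂ)+1) = (((n+1:ℕ)):ℂ) by push_cast; ring, Complex.norm_natCast]; push_cast; ring
  have hnn : ‖(n:ℂ)‖ = (n:ℝ) := by rw [Complex.norm_natCast]
  have hden : ‖b + (n:ℂ)‖ ≥ (n:ℝ) - ‖b‖ := by
    have := norm_sub_norm_le ((n:ℂ)) (-b)
    rw [norm_neg, hnn, sub_neg_eq_add, add_comm] at this
    linarith
  have hnum : ‖a + (n:ℂ)‖ ≤ ‖a‖ + (n:ℝ) := by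
    have := norm_add_le a ((n:ℂ))
    simpa [hnn] using this
  have hratio : ‖(a+(n:ℂ))*w/((b+(n:ℂ))*((n:ℂ)+1))‖ ≤ 1/2 := by
    rw [norm_div, norm_mul, norm_mul, hnormn1]
    have hbpos : (0:ℝ) < ‖b + (n:ℂ)‖ := by
      have : (0:ℝ) < (n:ℝ) - ‖b‖ := by
        have : (1:ℝ) ≤ (n:ℝ) := by exact_mod_cast hn1
        nlinarith [norm_nonneg b]
      linarith
    rw [div_le_iff₀ (by positivity)]
    have h1 : (1:ℝ) ≤ (n:ℝ) := by exact_mod_cast hn1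
    nlinarith [norm_nonneg w, norm_nonneg a, norm_nonneg b, norm_nonneg (a+(n:ℂ)),
      mul_le_mul_of_nonneg_right hnum (norm_nonneg w)]
  calc ‖(a+(n:ℂ))*w/((b+(n:ℂ))*((n:ℂ)+1))‖ * ‖risingFac a n / risingFac b n * w^n / (n.factorial : ℂ)‖
      ≤ (1/2) * ‖risingFac a n / risingFac b n * w^n / (n.factorial : ℂ)‖ :=
        mul_le_mul_of_nonneg_right hratio (norm_nonneg _)

lemma alg (x b A B2 K F W w : ℂ) (hb : b ≠ 0) (hb1 : b+1 ≠ 0) (hB2 : B2 ≠ 0)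
    (hK : K+1 ≠ 0) (hF : F ≠ 0) :
    x*A*(b+1+K)/(b*(b+1)*B2) * (W*w) / ((K+1)*F) + (b-2*x)/(2*b*(b+1)) * w * (A/B2 * W / F)
      = 1/2 * (x*A/((b+1)*B2) * (W*w) / ((K+1)*F))
        + 1/2 * (A*(x+1+K)/((b+1)*B2) * (W*w) / ((K+1)*F)) := by
  field_simp
  ring

lemma kummer_contig (a b w : ℂ) (hb : ∀ k : ℕ, b ≠ -(k:ℂ)) :
    kummerM a b w + (b - 2*a)/(2*b*(b+1)) * w * kummerM (a+1) (b+2) w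
      = (1/2) * kummerM a (b+1) w + (1/2) * kummerM (a+1) (b+1) w := by
  have hb1 : ∀ k : ℕ, b + 1 ≠ -(k:ℂ) := fun k h => hb (k+1) (by push_cast; linear_combination h)
  have hb2 : ∀ k : ℕ, b + 2 ≠ -(k:ℂ) := fun k h => hb (k+2) (by push_cast; linear_combination h)
  set C := (b - 2*a)/(2*b*(b+1)) with hC
  set f1 : ℕ → ℂ := fun n => risingFac a n / risingFac b n * w ^ n / (n.factorial : ℂ) with hf1
  set f2 : ℕ → ℂ := fun n => risingFac (a+1) n / risingFac (b+2) n * w ^ n / (n.factorial : ℂ) with hf2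
  set f3 : ℕ → ℂ := fun n => risingFac a n / risingFac (b+1) n * w ^ n / (n.factorial : ℂ) with hf3
  set f4 : ℕ → ℂ := fun n => risingFac (a+1) n / risingFac (b+1) n * w ^ n / (n.factorial : ℂ) with hf4
  have s1 : Summable f1 := summable_kummer a b w hb
  have s2 : Summable f2 := summable_kummer (a+1) (b+2) w hb2
  have s3 : Summable f3 := summable_kummer a (b+1) w hb1
  have s4 : Summable f4 := summable_kummer (a+1) (b+1) w hb1
  set g : ℕ → ℂ := fun n => Nat.rec 0 (fun k _ => C * w * f2 k) n with hg
  have hg0 : g 0 = 0 := rfl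
  have hgs : ∀ k, g (k+1) = C * w * f2 k := fun k => rfl
  have sg : Summable g := by
    rw [← summable_nat_add_iff 1]
    simpa [hgs] using s2.mul_left (C * w)
  have h2 : C * w * kummerM (a+1) (b+2) w = ∑' n, g n := by
    rw [Summable.tsum_eq_zero_add sg, hg0, zero_add]
    simp only [hgs]
    rw [kummerM, ← tsum_mul_left]
  have hM1 : kummerM a b w = ∑' n, f1 n := rfl
  have hM3 : (1/2 : ℂ) * kummerM a (b+1) w = ∑' n, (1/2 : ℂ) * f3 n := by
    rw [kummerM, ← tsum_mul_left]
  have hM4 : (1/2 : ℂ) * kummerM (a+1) (b+1) w = ∑' n, (1/2 : ℂ) * f4 n := by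
    rw [kummerM, ← tsum_mul_left]
  rw [hM1, h2, hM3, hM4, ← Summable.tsum_add s1 sg, ← Summable.tsum_add (s3.mul_left (1/2)) (s4.mul_left (1/2))]
  refine tsum_congr fun n => ?_
  rcases n with _ | k
  · simp [hf1, hf3, hf4, hg0, risingFac]
    norm_num
  · rw [hgs k, hf1, hf2, hf3, hf4]
    simp only
    have hB1 : risingFac (b+1) k ≠ 0 := risingFac_ne_zero hb1 k
    have hB2 : risingFac (b+2) k ≠ 0 := risingFac_ne_zero hb2 k
    have hk1 : (b+1+(k:ℂ)) ≠ 0 := fun h => hb1 k (by linear_combination h)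
    have h1 : ((k:ℂ)+1) ≠ 0 := Nat.cast_add_one_ne_zero k
    have h2 : ((k.factorial :ℕ):ℂ) ≠ 0 := Nat.cast_ne_zero.mpr k.factorial_ne_zero
    have hbne : b ≠ 0 := fun h => hb 0 (by simpa using h)
    have hb1ne : (b+1) ≠ 0 := fun h => hb1 0 (by simpa using h)
    have hrel : risingFac (b+1) k * (b+1+(k:ℂ)) = (b+1) * risingFac (b+2) k := by
      rw [← risingFac_succ]
      have h := risingFac_succ_left (b+1) k
      rw [show (b+1+1 : ℂ) = b+2 by ring] at h
      exact h
    have hq1 : risingFac a (k+1) / risingFac b (k+1)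
        = a * risingFac (a+1) k * (b+1+(k:ℂ)) / (b*(b+1)*risingFac (b+2) k) := by
      rw [risingFac_succ_left a, risingFac_succ_left b,
        div_eq_div_iff (mul_ne_zero hbne hB1) (mul_ne_zero (mul_ne_zero hbne hb1ne) hB2)]
      linear_combination (-(a * risingFac (a+1) k * b)) * hrel
    have hq3 : risingFac a (k+1) / risingFac (b+1) (k+1)
        = a * risingFac (a+1) k / ((b+1) * risingFac (b+2) k) := by
      rw [risingFac_succ_left a, risingFac_succ_left (b+1), show (b+1+1 : ℂ) = b+2 by ring]
    have hq4 : risingFac (a+1) (k+1) / risingFac (b+1) (k+1)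
        = risingFac (a+1) k * (a+1+(k:ℂ)) / ((b+1) * risingFac (b+2) k) := by
      rw [risingFac_succ (a+1), risingFac_succ_left (b+1), show (b+1+1 : ℂ) = b+2 by ring]
    rw [hq1, hq3, hq4, pow_succ, Nat.factorial_succ, hC]
    push_cast
    linear_combination alg a b (risingFac (a+1) k) (risingFac (b+2) k) (k:ℂ)
      ((k.factorial :ℕ):ℂ) (w^k) w hbne hb1ne hB2 h1 h2

/-- contiguous relation between Kummer functions used in the
rewriting of the formula for A. -/
theorem statement15 (p : ℝ) (hp : ∀ k : ℕ, p ≠ -((k : ℝ) + 1) / 2) (hp0 : p ≠ 0)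
    (κ1 κ2 κ3 ψ : ℝ)
    (hdet : (!![κ1, κ3; κ3, κ2] : Matrix (Fin 2) (Fin 2) ℝ).det ≠ 0)
    (κ : ℂ) (hκ : κ ^ 2 = ((!![κ1, κ3; κ3, κ2] : Matrix (Fin 2) (Fin 2) ℝ).det : ℂ))
    (σ : ℝ) (hσ : σ = 2 * p * κ3 - ψ * κ1)
    (m : ℂ) (hm : m = (σ : ℂ) / (2 * Complex.I * κ) + (p : ℂ)) :
    ∀ z : ℂ,
      kummerM m (2 * (p : ℂ)) (-2 * Complex.I * κ * z)
        - (ψ : ℂ) * (κ1 : ℂ) / (2 * (p : ℂ) * (2 * (p : ℂ) + 1)) * z *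
            kummerM (m + 1) (2 * (p : ℂ) + 2) (-2 * Complex.I * κ * z)
      = (1/2) * kummerM m (2 * (p : ℂ) + 1) (-2 * Complex.I * κ * z)
        + (1/2) * kummerM (m + 1) (2 * (p : ℂ) + 1) (-2 * Complex.I * κ * z)
        - (κ3 : ℂ) / (2 * (p : ℂ) + 1) * z *
            kummerM (m + 1) (2 * (p : ℂ) + 2) (-2 * Complex.I * κ * z) := by
  intro z
  have hκ0 : κ ≠ 0 := by
    intro h
    apply hdet
    have h0 : ((!![κ1, κ3; κ3, κ2].det : ℝ) : ℂ) = 0 := by rw [← hκ, h]; ring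
    exact_mod_cast h0
  have hb : ∀ k : ℕ, 2 * (p:ℂ) ≠ -(k:ℂ) := by
    intro k h
    have h' : 2 * p = -(k:ℝ) := by exact_mod_cast h
    rcases k with _ | j
    · simp at h'; exact hp0 (by linarith)
    · exact hp j (by push_cast at h' ⊢; linarith)
  have key := kummer_contig m (2*(p:ℂ)) (-2 * Complex.I * κ * z) hb
  have hpne : (p:ℂ) ≠ 0 := Complex.ofReal_ne_zero.mpr hp0
  have hp1ne : 2*(p:ℂ) + 1 ≠ 0 := fun h => hb 1 (by push_cast; linear_combination h)
  have hIne : Complex.I ≠ 0 := Complex.I_ne_zero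
  have hc : (2*(p:ℂ) - 2*m)/(2*(2*(p:ℂ))*(2*(p:ℂ)+1)) * (-2 * Complex.I * κ * z)
      = ((κ3:ℂ)/(2*(p:ℂ)+1) - (ψ:ℂ)*(κ1:ℂ)/(2*(p:ℂ)*(2*(p:ℂ)+1))) * z := by
    rw [hm]
    have hσ' : (σ:ℂ) = 2*(p:ℂ)*(κ3:ℂ) - (ψ:ℂ)*(κ1:ℂ) := by exact_mod_cast congrArg Complex.ofReal hσ
    rw [hσ']
    field_simp [hκ0, hpne, hp1ne, Complex.I_ne_zero]
    ring
  linear_combination key - hc * kummerM (m + 1) (2*(p:ℂ) + 2) (-2 * Complex.I * κ * z)
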